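/- Assume the Krull dimension of A is strictly greater than 1 and that A satisfies condition (*). Then for every intermediate ring B with A ⊆ B ⊆ Ā such that B is a Noetherian integral domain satisfying Serre's condition (S₂), one has A' ⊆ B. -/
import Mathlib


/-!
`A` is a Noetherian integral domain with fraction field `K = FractionRing A`.
`A'` is the intersection, inside `K`, of the localizations `A_p` at all height-one
primes `p` of `A`; membership in `A'` is expressed by the predicate `MemHtOneLoc`.
The depth of a Noetherian local ring is the maximal length of a regular sequence in
its maximal ideal; Serre's condition `(S₂)` (`depth(A_p) ≥ min(2, ht p)` for all
primes `p`) is expressed by `SerreS2`, using the maximal ideal `p·A_p` of the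
localization `A_p` and explicit chains of primes to express heights.
-/

/-- `P` is a prime ideal of height one: it is prime, there is a chain `q < P` of primes
below it, but no chain `q₁ < q₂ < P` of primes below it. -/
def HeightOneIdeal {S : Type*} [CommRing S] (P : Ideal S) : Prop :=
  P.IsPrime ∧ (∃ q : Ideal S, q.IsPrime ∧ q < P) ∧
    ¬ ∃ q₁ q₂ : Ideal S, q₁.IsPrime ∧ q₂.IsPrime ∧ q₁ < q₂ ∧ q₂ < P

/-- `x ∈ A_p ⊆ K` for every height-one prime `p` of `A`, i.e. `x ∈ A'`. -/
def MemHtOneLoc (A : Type*) [CommRing A] (K : Type*) [CommRing K] [Algebra A K]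
    (x : K) : Prop :=
  ∀ p : Ideal A, HeightOneIdeal p →
    ∃ a s : A, s ∉ p ∧ x * algebraMap A K s = algebraMap A K a

/-- `r` is a regular sequence on `S` contained in the ideal `I`: each `r i` lies in `I`
and is a nonzerodivisor modulo the ideal generated by the previous terms. -/
def IsRegSeq {S : Type*} [CommRing S] (I : Ideal S) {d : ℕ} (r : Fin d → S) : Prop :=
  (∀ i, r i ∈ I) ∧ ∀ (i : Fin d) (x : S),
    r i * x ∈ Ideal.span {y : S | ∃ j : Fin d, j < i ∧ y = r j} →
    x ∈ Ideal.span {y : S | ∃ j : Fin d, j < i ∧ y = r j}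

/-- Serre's condition `(S₂)`: for every prime `p` of `A`, the depth of the local ring
`A_p` is at least `min(2, ht p)`; heights are expressed by chains of primes and depth
by the existence of regular sequences in the maximal ideal `p·A_p` of `A_p`. -/
def SerreS2 (A : Type*) [CommRing A] : Prop :=
  ∀ (p : Ideal A) (hp : p.IsPrime),
    ((∃ q : Ideal A, q.IsPrime ∧ q < p) →
      ∃ r : Fin 1 → Localization (@Ideal.primeCompl A _ p hp),
        IsRegSeq (p.map (algebraMap A (Localization (@Ideal.primeCompl A _ p hp)))) r) ∧
    ((∃ q₁ q₂ : Ideal A, q₁.IsPrime ∧ q₂.IsPrime ∧ q₁ < q₂ ∧ q₂ < p) →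
      ∃ r : Fin 2 → Localization (@Ideal.primeCompl A _ p hp),
        IsRegSeq (p.map (algebraMap A (Localization (@Ideal.primeCompl A _ p hp)))) r)

lemma maxColon {S : Type*} [CommRing S] [IsNoetherianRing S] (b a : S)
    (ha : a ∉ Ideal.span {b}) :
    ∃ m : S, m ∉ Ideal.span {b} ∧
      (Ideal.span {b}).colon (Ideal.span {a}) ≤ (Ideal.span {b}).colon (Ideal.span {m}) ∧
      ((Ideal.span {b}).colon (Ideal.span {m})).IsPrime := by
  set T : Set (Ideal S) := {I | ∃ c : S, c ∉ Ideal.span {b} ∧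
    (Ideal.span {b}).colon (Ideal.span {a}) ≤ (Ideal.span {b}).colon (Ideal.span {c}) ∧
    I = (Ideal.span {b}).colon (Ideal.span {c})} with hTdef
  have hT : T.Nonempty := ⟨_, a, ha, le_rfl, rfl⟩
  obtain ⟨P, hPT, hmax⟩ :=
    (set_has_maximal_iff_noetherian.mpr (inferInstance : IsNoetherian S S)) T hT
  obtain ⟨m, hm, hma, rfl⟩ := hPT
  refine ⟨m, hm, hma, ?_⟩
  constructor
  · intro htop
    have : (1 : S) ∈ (Ideal.span {b}).colon (Ideal.span {m}) := htop ▸ Submodule.mem_top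
    rw [Ideal.mem_colon_span_singleton, one_mul] at this
    exact hm this
  · intro u v huv
    by_cases hu : u ∈ (Ideal.span {b}).colon (Ideal.span {m})
    · exact Or.inl hu
    right
    have hum : u * m ∉ Ideal.span {b} := by rwa [Ideal.mem_colon_span_singleton] at hu
    have hle : (Ideal.span {b}).colon (Ideal.span {m}) ≤
        (Ideal.span {b}).colon (Ideal.span {u * m}) := by
      intro c hc
      rw [Ideal.mem_colon_span_singleton] at hc ⊢
      have : c * (u * m) = u * (c * m) := by ring
      rw [this]
      exact Ideal.mul_mem_left _ _ hc
    have hmem : (Ideal.span {b}).colon (Ideal.span {u * m}) ∈ T :=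
      ⟨u * m, hum, le_trans hma hle, rfl⟩
    have heq : (Ideal.span {b}).colon (Ideal.span {m}) =
        (Ideal.span {b}).colon (Ideal.span {u * m}) :=
      le_antisymm hle (by
        by_contra hlt
        exact hmax _ hmem (lt_of_le_of_ne hle (fun h => hlt (h ▸ le_rfl))))
    rw [heq, Ideal.mem_colon_span_singleton]
    have : v * (u * m) = (u * v) * m := by ring
    rw [this]
    rw [Ideal.mem_colon_span_singleton] at huv
    exact huv


lemma regseq_two {L : Type*} [CommRing L] {I : Ideal L} {r : Fin 2 → L}
    (hr : IsRegSeq I r) {b m : L} (hreg : ∀ x : L, b * x = 0 → x = 0)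
    (h0 : r 0 * m ∈ Ideal.span {b}) (h1 : r 1 * m ∈ Ideal.span {b}) :
    m ∈ Ideal.span {b} := by
  have hset0 : {y : L | ∃ j : Fin 2, j < (0 : Fin 2) ∧ y = r j} = (∅ : Set L) := by
    ext y
    simp only [Set.mem_setOf_eq, Set.mem_empty_iff_false, iff_false, not_exists]
    rintro j ⟨hj, -⟩
    exact absurd hj (by omega)
  have hset1 : {y : L | ∃ j : Fin 2, j < (1 : Fin 2) ∧ y = r j} = ({r 0} : Set L) := by
    ext y
    simp only [Set.mem_setOf_eq, Set.mem_singleton_iff]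
    constructor
    · rintro ⟨j, hj, rfl⟩
      have hj0 : j = 0 := by omega
      rw [hj0]
    · rintro rfl
      exact ⟨0, by omega, rfl⟩
  obtain ⟨c, hc⟩ := Ideal.mem_span_singleton'.mp h0
  obtain ⟨d, hd⟩ := Ideal.mem_span_singleton'.mp h1
  -- hc : c * b = r 0 * m, hd : d * b = r 1 * m
  have e : b * (r 1 * c) = b * (r 0 * d) := by
    calc b * (r 1 * c) = r 1 * (c * b) := by ring
      _ = r 1 * (r 0 * m) := by rw [hc]
      _ = r 0 * (r 1 * m) := by ring
      _ = r 0 * (d * b) := by rw [hd]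
      _ = b * (r 0 * d) := by ring
  have hcd : r 1 * c = r 0 * d := by
    have hz : b * (r 1 * c - r 0 * d) = 0 := by rw [mul_sub, e, sub_self]
    exact sub_eq_zero.mp (hreg _ hz)
  have hc1 : c ∈ Ideal.span ({r 0} : Set L) := by
    have : r 1 * c ∈ Ideal.span {y : L | ∃ j : Fin 2, j < (1 : Fin 2) ∧ y = r j} := by
      rw [hset1, hcd]
      exact Ideal.mem_span_singleton'.mpr ⟨d, by ring⟩
    have := hr.2 1 c this
    rwa [hset1] at this
  obtain ⟨e', he'⟩ := Ideal.mem_span_singleton'.mp hc1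
  -- he' : e' * r 0 = c
  have h00 : r 0 * (m - b * e') = 0 := by
    have : r 0 * m = b * (e' * r 0) := by rw [he', ← hc]; ring
    rw [mul_sub]
    rw [this]
    ring
  have hz : m - b * e' = 0 := by
    have hmem : r 0 * (m - b * e') ∈
        Ideal.span {y : L | ∃ j : Fin 2, j < (0 : Fin 2) ∧ y = r j} := by
      rw [h00]; exact Ideal.zero_mem _
    have := hr.2 0 _ hmem
    rwa [hset0, Ideal.span_empty, Ideal.mem_bot] at this
  have : m = b * e' := by
    have := sub_eq_zero.mp hz
    exact this
  rw [this]
  exact Ideal.mem_span_singleton'.mpr ⟨e', by ring⟩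

set_option maxHeartbeats 2000000 in
/-- Assume `dim A > 1` and condition (*): every height-one prime of
the normalization `Ā` (the integral closure of `A` in `K`) contracts to a height-one
prime of `A`.  Then for every intermediate ring `A ⊆ B ⊆ Ā` which is a Noetherian
integral domain satisfying `(S₂)`, one has `A' ⊆ B`. -/
theorem statement11 (A : Type) [CommRing A] [IsDomain A] [IsNoetherianRing A]
    (hdim : 1 < ringKrullDim A)
    (hstar : ∀ P : Ideal (integralClosure A (FractionRing A)), HeightOneIdeal P →
      HeightOneIdeal (P.comap (algebraMap A (integralClosure A (FractionRing A)))))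
    (B : Subring (FractionRing A))
    (hAB : ∀ a : A, algebraMap A (FractionRing A) a ∈ B)
    (hBint : ∀ x ∈ B, x ∈ integralClosure A (FractionRing A))
    (hBdom : IsDomain B)
    (hBnoeth : IsNoetherianRing B)
    (hBS2 : SerreS2 B) :
    ∀ x : FractionRing A, MemHtOneLoc A (FractionRing A) x → x ∈ B := by
  intro x hx
  by_contra hxB
  -- the map A → B
  set f : A →+* ↥B := (algebraMap A (FractionRing A)).codRestrict B.toSubsemiring hAB with hf
  -- the inclusion B → integral closure
  set g : ↥B →+* ↥(integralClosure A (FractionRing A)) :=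
    { toFun := fun y => ⟨y.1, hBint y.1 y.2⟩,
      map_one' := rfl, map_mul' := fun _ _ => rfl,
      map_zero' := rfl, map_add' := fun _ _ => rfl } with hg
  have hginj : Function.Injective g := by
    intro y z hyz
    have hv : (g y).1 = (g z).1 := congrArg Subtype.val hyz
    exact Subtype.ext hv
  letI : Algebra ↥B ↥(integralClosure A (FractionRing A)) := g.toAlgebra
  have halg : (algebraMap ↥B ↥(integralClosure A (FractionRing A))) = g := rfl
  have hgf : (algebraMap A ↥(integralClosure A (FractionRing A))) = g.comp f := by
    ext a
    rfl
  haveI : Algebra.IsIntegral ↥B ↥(integralClosure A (FractionRing A)) := by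
    constructor
    intro y
    obtain ⟨p, pm, pev⟩ := y.2
    refine ⟨p.map f, pm.map f, ?_⟩
    have hsub : Function.Injective ((integralClosure A (FractionRing A)).val.toRingHom) :=
      fun u v huv => Subtype.ext huv
    apply hsub
    rw [map_zero]
    rw [Polynomial.eval₂_map]
    rw [Polynomial.hom_eval₂]
    have hcomp : ((integralClosure A (FractionRing A)).val.toRingHom.comp
        ((algebraMap ↥B ↥(integralClosure A (FractionRing A))).comp f)) = algebraMap A (FractionRing A) := by
      ext a; rfl
    rw [hcomp]
    exact pev
  -- fraction representation of x
  obtain ⟨⟨a0, s0⟩, hfr⟩ := IsLocalization.surj (M := nonZeroDivisors A) (S := (FractionRing A)) x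
  set bB : ↥B := f s0.1 with hbB
  set aB : ↥B := f a0 with haB
  have hbBval : (bB : (FractionRing A)) = algebraMap A (FractionRing A) s0.1 := rfl
  have haBval : (aB : (FractionRing A)) = algebraMap A (FractionRing A) a0 := rfl
  have hs0ne : algebraMap A (FractionRing A) s0.1 ≠ 0 := by
    have : (s0 : A) ≠ 0 := nonZeroDivisors.ne_zero s0.2
    intro h
    exact this (IsFractionRing.injective A (FractionRing A) (by rw [h, map_zero]))
  have ha : aB ∉ Ideal.span {bB} := by
    intro hmem
    obtain ⟨u, hu⟩ := Ideal.mem_span_singleton'.mp hmem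
    apply hxB
    have hxu : x = (u : (FractionRing A)) := by
      have h1 : x * algebraMap A (FractionRing A) s0.1 = (u : (FractionRing A)) * algebraMap A (FractionRing A) s0.1 := by
        rw [hfr, ← haBval, ← hu]
        push_cast
        rw [hbBval]
      exact mul_right_cancel₀ hs0ne h1
    rw [hxu]; exact u.2
  -- part 1: height one primes of B do not contain the conductor
  have key : ∀ q : Ideal ↥B, HeightOneIdeal q →
      ¬ (Ideal.span {bB}).colon (Ideal.span {aB}) ≤ q := by
    intro q hq hle
    haveI hqP : q.IsPrime := hq.1
    -- lying over
    obtain ⟨Q, -, hQp, hQc⟩ := Ideal.exists_ideal_over_prime_of_isIntegral q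
      (⊥ : Ideal ↥(integralClosure A (FractionRing A))) (by
        intro z hz
        have : g z = 0 := hz
        have : z = 0 := hginj (by rw [this, map_zero])
        rw [this]; exact q.zero_mem)
    haveI := hQp
    -- q is not ⊥
    obtain ⟨q', hq'p, hq'lt⟩ := hq.2.1
    have hqne : q ≠ ⊥ := fun h => by
      rw [h] at hq'lt
      exact (not_lt_bot hq'lt)
    -- Q is height one
    have hQht : HeightOneIdeal Q := by
      refine ⟨hQp, ⟨⊥, Ideal.bot_prime, ?_⟩, ?_⟩
      · rw [bot_lt_iff_ne_bot]
        intro hQbot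
        apply hqne
        rw [← hQc, hQbot]
        ext z
        simp only [Ideal.mem_comap, Ideal.mem_bot, halg]
        exact ⟨fun h => hginj (by rw [h, map_zero]), fun h => by rw [h, map_zero]⟩
      · rintro ⟨Q₁, Q₂, hQ₁, hQ₂, h12, h2Q⟩
        haveI := hQ₁; haveI := hQ₂
        apply hq.2.2
        refine ⟨Q₁.comap (algebraMap ↥B ↥(integralClosure A (FractionRing A))),
          Q₂.comap (algebraMap ↥B ↥(integralClosure A (FractionRing A))), ?_, ?_, ?_, ?_⟩
        · exact Ideal.IsPrime.comap _
        · exact Ideal.IsPrime.comap _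
        · obtain ⟨z, hz2, hz1⟩ := SetLike.exists_of_lt h12
          exact Ideal.comap_lt_comap_of_integral_mem_sdiff (le_of_lt h12) ⟨hz2, hz1⟩
            (Algebra.IsIntegral.isIntegral z)
        · rw [← hQc]
          obtain ⟨z, hz2, hz1⟩ := SetLike.exists_of_lt h2Q
          exact Ideal.comap_lt_comap_of_integral_mem_sdiff (le_of_lt h2Q) ⟨hz2, hz1⟩
            (Algebra.IsIntegral.isIntegral z)
    -- contract to A
    have hpA := hstar Q hQht
    obtain ⟨a', s', hs'p, heq⟩ := hx _ hpA
    -- comap q f = comap Q (A → closure)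
    have hcomap : q.comap f = Q.comap (algebraMap A ↥(integralClosure A (FractionRing A))) := by
      rw [← hQc, Ideal.comap_comap, halg, hgf]
    have hsq : f s' ∉ q := by
      intro h
      apply hs'p
      rw [← hcomap]
      exact h
    apply hsq
    apply hle
    rw [Ideal.mem_colon_span_singleton]
    rw [Ideal.mem_span_singleton']
    refine ⟨f a', ?_⟩
    apply Subtype.ext
    push_cast
    have h1 : ((f a' : ↥B) : (FractionRing A)) = algebraMap A (FractionRing A) a' := rfl
    have h2 : ((f s' : ↥B) : (FractionRing A)) = algebraMap A (FractionRing A) s' := rfl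
    rw [h1, h2, hbBval, haBval, ← heq, ← hfr]
    ring
  -- conductor maximal prime
  haveI := hBnoeth
  obtain ⟨m, hm, hma, hP⟩ := maxColon bB aB ha
  set P : Ideal ↥B := (Ideal.span {bB}).colon (Ideal.span {m}) with hPdef
  have hbP : bB ∈ P := by
    rw [Ideal.mem_colon_span_singleton]
    exact Ideal.mem_span_singleton'.mpr ⟨m, by ring⟩
  have hbne : bB ≠ 0 := by
    intro h
    apply hs0ne
    rw [← hbBval, h]
    rfl
  have hbotP : (⊥ : Ideal ↥B) < P := by
    rw [bot_lt_iff_ne_bot]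
    intro h
    rw [h] at hbP
    exact hbne (Ideal.mem_bot.mp hbP)
  haveI := hBdom
  have hchain : ∃ q₁ q₂ : Ideal ↥B, q₁.IsPrime ∧ q₂.IsPrime ∧ q₁ < q₂ ∧ q₂ < P := by
    by_contra hno
    exact key P ⟨hP, ⟨⊥, Ideal.bot_prime, hbotP⟩, hno⟩ hma
  set L := Localization (@Ideal.primeCompl ↥B _ P hP) with hL
  haveI := hP
  set φ : ↥B →+* L := algebraMap ↥B L with hφ
  obtain ⟨r, hr⟩ := (hBS2 P hP).2 hchain
  haveI hdomL : IsDomain L := IsLocalization.isDomain_localization P.primeCompl_le_nonZeroDivisors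
  have hinj : Function.Injective φ :=
    IsLocalization.injective L P.primeCompl_le_nonZeroDivisors
  have hφb : φ bB ≠ 0 := by
    intro h
    exact hbne (hinj (by rw [h, map_zero]))
  have hregb : ∀ t : L, φ bB * t = 0 → t = 0 := by
    intro t ht
    rcases mul_eq_zero.mp ht with h | h
    · exact absurd h hφb
    · exact h
  have hr01 : ∀ i : Fin 2, r i * φ m ∈ Ideal.span {φ bB} := by
    intro i
    have hri : r i ∈ P.map φ := hr.1 i
    have hmm : φ m ∈ Ideal.map φ (Ideal.span {m}) :=
      Ideal.mem_map_of_mem φ (Ideal.mem_span_singleton_self m)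
    have hmul : r i * φ m ∈ (P.map φ) * (Ideal.map φ (Ideal.span {m})) :=
      Ideal.mul_mem_mul hri hmm
    rw [← Ideal.map_mul] at hmul
    have hle2 : P * Ideal.span {m} ≤ Ideal.span {bB} := by
      rw [Ideal.mul_le]
      intro p hp c hc
      obtain ⟨u, rfl⟩ := Ideal.mem_span_singleton'.mp hc
      have : p * (u * m) = u * (p * m) := by ring
      rw [this]
      exact Ideal.mul_mem_left _ _ (Ideal.mem_colon_span_singleton.mp hp)
    have := Ideal.map_mono hle2 hmul
    rwa [Ideal.map_span, Set.image_singleton] at this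
  have hmain : φ m ∈ Ideal.span {φ bB} := regseq_two hr hregb (hr01 0) (hr01 1)
  obtain ⟨e, he⟩ := Ideal.mem_span_singleton'.mp hmain
  obtain ⟨⟨u, t⟩, hut⟩ := IsLocalization.surj (M := P.primeCompl) (S := L) e
  have htP : (t : ↥B) ∈ P := by
    rw [Ideal.mem_colon_span_singleton]
    rw [Ideal.mem_span_singleton']
    refine ⟨u, ?_⟩
    apply hinj
    rw [map_mul, map_mul]
    calc φ u * φ bB = (e * φ t) * φ bB := by rw [← hut]
      _ = (e * φ bB) * φ t := by ring
      _ = φ m * φ t := by rw [he]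
      _ = φ t * φ m := by ring
  exact t.2 htP
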